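/- arXiv:2406.12609 — 2 statements merged into one kernel-verified Lean document; each statement's English description precedes it below -/
import Mathlib

section
/- Let G be a G_δ subset of 2^ω × 2^ω such that μ(G|_x) = 1 for every x ∈ 2^ω and μ({x ∈ 2^ω : G|_x = 2^ω}) = 1. Then there exists a σ-compact set F ⊆ G such that μ(F|_x) = 1 for every x ∈ 2^ω and μ({x ∈ 2^ω : F|_x = 2^ω}) = 1. -/
open Set Filter Topology MeasureTheory

abbrev Cantor : Type := ℕ → Bool

/-- Coordinatewise addition mod 2 on the Cantor space. -/
def cadd (s t : Cantor) : Cantor := fun n => xor (s n) (t n)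

/-- Translate of a set: `t ⊕ P`. -/
def tAdd (t : Cantor) (P : Set Cantor) : Set Cantor := (cadd t) '' P

/-- Vertical section of a subset of the plane `Cantor × Cantor`. -/
def sect (A : Set (Cantor × Cantor)) (x : Cantor) : Set Cantor := {y | (x, y) ∈ A}

/-- A set is Fσ if it is a countable union of closed sets. -/
def IsFSigma {Z : Type*} [TopologicalSpace Z] (s : Set Z) : Prop :=
  ∃ f : ℕ → Set Z, (∀ n, IsClosed (f n)) ∧ s = ⋃ n, f n

/-- The Hurewicz covering property for a subset of a topological space. -/
def Hurewicz {Z : Type*} [TopologicalSpace Z] (X : Set Z) : Prop :=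
  ∀ U : ℕ → Set (Set Z), (∀ n, (∀ u ∈ U n, IsOpen u) ∧ X ⊆ ⋃₀ U n) →
    ∃ F : ℕ → Set (Set Z), (∀ n, F n ⊆ U n ∧ (F n).Finite) ∧
      ∀ x ∈ X, ∀ᶠ n in atTop, x ∈ ⋃₀ F n

/-- The Menger covering property for a subset of a topological space. -/
def Menger {Z : Type*} [TopologicalSpace Z] (X : Set Z) : Prop :=
  ∀ U : ℕ → Set (Set Z), (∀ n, (∀ u ∈ U n, IsOpen u) ∧ X ⊆ ⋃₀ U n) →
    ∃ F : ℕ → Set (Set Z), (∀ n, F n ⊆ U n ∧ (F n).Finite) ∧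
      X ⊆ ⋃ n, ⋃₀ F n

/-- λ'-set: every countable set `A` of the ambient space is Gδ relative to `X ∪ A`. -/
def LambdaPrime {Z : Type*} [TopologicalSpace Z] (X : Set Z) : Prop :=
  ∀ A : Set Z, A.Countable → ∃ G : Set Z, IsGδ G ∧ (X ∪ A) ∩ G = A

/-- A set is totally imperfect if it contains no (nonempty) perfect subset. -/
def TotallyImperfect {Z : Type*} [TopologicalSpace Z] (X : Set Z) : Prop :=
  ∀ P : Set Z, P ⊆ X → Perfect P → P = ∅

/-- Perfectly meager in the transitive sense. -/
def PMT (X : Set Cantor) : Prop :=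
  ∀ P : Set Cantor, Perfect P → P.Nonempty →
    ∃ F : Set Cantor, IsSigmaCompact F ∧ X ⊆ F ∧
      ∀ t : Cantor, IsMeagre (Subtype.val ⁻¹' F : Set (tAdd t P))

/-- `μ` is the standard product (Haar) probability measure on the Cantor space. -/
def IsCantorMeasure (μ : Measure Cantor) : Prop :=
  ∀ s : Finset ℕ, ∀ f : ℕ → Bool,
    μ {x : Cantor | ∀ i ∈ s, x i = f i} = (1 / 2 : ENNReal) ^ s.card

/-- cov(N) with respect to a measure μ on the Cantor space. -/
noncomputable def covNull (μ : Measure Cantor) : Cardinal :=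
  sInf { c : Cardinal | ∃ S : Set (Set Cantor), Cardinal.mk S = c ∧
    (∀ A ∈ S, μ A = 0) ∧ ⋃₀ S = univ }

/-- cov(M) : least size of a family of meager sets covering the Cantor space. -/
noncomputable def covMeager : Cardinal :=
  sInf { c : Cardinal | ∃ S : Set (Set Cantor), Cardinal.mk S = c ∧
    (∀ A ∈ S, IsMeagre A) ∧ ⋃₀ S = univ }

/-- The bounding number b: least size of an unbounded family in (ω^ω, ≤*). -/
noncomputable def boundingNumber : Cardinal :=
  sInf { c : Cardinal | ∃ S : Set (ℕ → ℕ), Cardinal.mk S = c ∧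
    ¬ ∃ g : ℕ → ℕ, ∀ f ∈ S, ∀ᶠ n in atTop, f n ≤ g n }


section Stmt5Aux

/-- Prefix cylinder determined by a finite list of bits. -/
def Cyl (L : List Bool) : Set Cantor := {y | ∀ i < L.length, y i = L.getD i false}

lemma cyl_clopen (L : List Bool) : IsClopen (Cyl L) := by
  have : Cyl L = ⋂ i ∈ Finset.range L.length, (fun y : Cantor => y i) ⁻¹' {L.getD i false} := by
    ext y; simp [Cyl]
  rw [this]
  apply isClopen_biInter_finset
  intro i _
  exact (isClopen_discrete {L.getD i false}).preimage (continuous_apply i)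

lemma exists_cyl_subset {V : Set Cantor} (hV : IsOpen V) {x : Cantor} (hx : x ∈ V) :
    ∃ L : List Bool, x ∈ Cyl L ∧ Cyl L ⊆ V := by
  rcases isOpen_pi_iff.1 hV x hx with ⟨I, u, hu, hsub⟩
  rcases I.bddAbove with ⟨n, hn⟩
  refine ⟨(List.range (n+1)).map x, ?_, ?_⟩
  · intro i hi
    simp at hi
    simp [List.getD, List.getElem?_map, List.getElem?_range (Nat.lt_succ_of_le hi)]
  · intro y hy
    apply hsub
    intro a ha
    have han : a < n + 1 := Nat.lt_succ_of_le (hn ha)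
    have : y a = x a := by
      have := hy a (by simpa using han)
      simpa [List.getD, List.getElem?_map, List.getElem?_range han] using this
    rw [this]; exact (hu a ha).2

lemma open_inner (μ : Measure Cantor) {V : Set Cantor} (hV : IsOpen V) {r : ENNReal}
    (hr : r < μ V) : ∃ K : Set Cantor, IsClopen K ∧ K ⊆ V ∧ r < μ K := by
  set A : ℕ → Set Cantor := fun n =>
    ⋃ L ∈ {L : List Bool | Encodable.encode L ≤ n ∧ Cyl L ⊆ V}, Cyl L with hA
  have hfin : ∀ n, {L : List Bool | Encodable.encode L ≤ n ∧ Cyl L ⊆ V}.Finite := by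
    intro n
    apply Set.Finite.subset ((Set.finite_Iic n).preimage (f := Encodable.encode)
      (Encodable.encode_injective.injOn))
    intro L hL; exact hL.1
  have hclo : ∀ n, IsClopen (A n) := fun n => (hfin n).isClopen_biUnion (fun L _ => cyl_clopen L)
  have hsub : ∀ n, A n ⊆ V := by
    intro n y hy; simp only [hA, mem_iUnion] at hy
    rcases hy with ⟨L, hL, hyL⟩; exact hL.2 hyL
  have hunion : ⋃ n, A n = V := by
    apply subset_antisymm (iUnion_subset hsub)
    intro x hx
    rcases exists_cyl_subset hV hx with ⟨L, hxL, hLV⟩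
    exact mem_iUnion.2 ⟨Encodable.encode L, mem_iUnion.2 ⟨L, mem_iUnion.2 ⟨⟨le_refl _, hLV⟩, hxL⟩⟩⟩
  have hmono : Monotone A := by
    intro m n hmn
    apply Set.biUnion_subset_biUnion_left
    intro L hL; exact ⟨le_trans hL.1 hmn, hL.2⟩
  have := hmono.measure_iUnion (μ := μ)
  rw [hunion] at this
  rw [this] at hr
  rcases lt_iSup_iff.1 hr with ⟨n, hn⟩
  exact ⟨A n, hclo n, hsub n, hn⟩

lemma sect_open {W : Set (Cantor × Cantor)} (hW : IsOpen W) (x : Cantor) :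
    IsOpen (sect W x) := hW.preimage (Continuous.prodMk_right x)

lemma clopen_approx (μ : Measure Cantor) {W : Set (Cantor × Cantor)} (hW : IsOpen W)
    {c ε : ENNReal} (hc : c ≤ 1) (hε : 0 < ε) (hsec : ∀ x, c ≤ μ (sect W x)) :
    ∃ K : Set (Cantor × Cantor), IsClopen K ∧ K ⊆ W ∧ ∀ x, c ≤ μ (sect K x) + ε := by
  have key : ∀ x : Cantor, ∃ V C : Set Cantor, IsClopen V ∧ x ∈ V ∧ IsClopen C ∧
      V ×ˢ C ⊆ W ∧ c ≤ μ C + ε := by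
    intro x
    have hCex : ∃ C : Set Cantor, IsClopen C ∧ C ⊆ sect W x ∧ c ≤ μ C + ε := by
      rcases le_or_gt c ε with h | h
      · exact ⟨∅, isClopen_empty, empty_subset _, le_add_left h⟩
      · have hc0 : c ≠ 0 := fun h0 => by simp [h0] at h
        have hr : c - ε < μ (sect W x) :=
          lt_of_lt_of_le (ENNReal.sub_lt_self (lt_of_le_of_lt hc ENNReal.one_lt_top).ne
            hc0 hε.ne') (hsec x)
        rcases open_inner μ (sect_open hW x) hr with ⟨C, hC, hCs, hCr⟩
        refine ⟨C, hC, hCs, ?_⟩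
        calc c = c - ε + ε := (tsub_add_cancel_of_le h.le).symm
        _ ≤ μ C + ε := add_le_add_left hCr.le ε
    rcases hCex with ⟨C, hC, hCs, hCmeas⟩
    have htube : {x} ×ˢ C ⊆ W := by
      rintro ⟨a, b⟩ ⟨ha, hb⟩
      simp only [mem_singleton_iff] at ha
      subst ha; exact hCs hb
    rcases generalized_tube_lemma isCompact_singleton (hC.isClosed.isCompact) hW htube
      with ⟨u, v, huo, hvo, hxu, hCv, huv⟩
    rcases exists_cyl_subset huo (hxu rfl) with ⟨L, hxL, hLu⟩
    refine ⟨Cyl L, C, cyl_clopen L, hxL, hC, ?_, hCmeas⟩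
    exact subset_trans (prod_mono hLu hCv) huv
  choose V C hVclo hxV hCclo hVC hCmeas using key
  rcases isCompact_univ.elim_finite_subcover V (fun x => (hVclo x).isOpen)
    (fun x _ => mem_iUnion.2 ⟨x, hxV x⟩) with ⟨t, ht⟩
  refine ⟨⋃ x ∈ t, (V x) ×ˢ (C x), ?_, ?_, ?_⟩
  · exact isClopen_biUnion_finset (fun x _ => (hVclo x).prod (hCclo x))
  · exact iUnion₂_subset (fun x _ => hVC x)
  · intro x'
    have : x' ∈ ⋃ x ∈ t, V x := ht (mem_univ x')
    rcases mem_iUnion₂.1 this with ⟨x, hxt, hx'⟩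
    have hsub : C x ⊆ sect (⋃ x ∈ t, (V x) ×ˢ (C x)) x' := by
      intro y hy
      exact mem_iUnion₂.2 ⟨x, hxt, ⟨hx', hy⟩⟩
    calc c ≤ μ (C x) + ε := hCmeas x
    _ ≤ _ := add_le_add_left (measure_mono hsub) ε

lemma half_split (a : ENNReal) (k : ℕ) : a / 2 ^ (k + 1) + a / 2 ^ (k + 1) = a / 2 ^ k := by
  rw [ENNReal.div_add_div_same, ← two_mul, pow_succ, mul_comm ((2:ENNReal)^k) 2,
    ENNReal.mul_div_mul_left _ _ (by norm_num) (by norm_num)]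

lemma compact_approx (μ : Measure Cantor) (h1 : μ univ = 1)
    (U : ℕ → Set (Cantor × Cantor)) (hUo : ∀ n, IsOpen (U n))
    (hU1 : ∀ n x, (1:ENNReal) ≤ μ (sect (U n) x))
    {ε : ENNReal} (hε : 0 < ε) :
    ∃ K : Set (Cantor × Cantor), IsCompact K ∧ K ⊆ ⋂ n, U n ∧
      ∀ x, (1:ENNReal) ≤ μ (sect K x) + ε := by
  set d : ℕ → ENNReal := fun n => Nat.rec (ε / 2) (fun n dn => dn + ε / 2 ^ (n + 2)) n with hd
  have hd0 : d 0 = ε / 2 := rfl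
  have hdsucc : ∀ n, d (n + 1) = d n + ε / 2 ^ (n + 2) := fun n => rfl
  have hdsum : ∀ n, d n + ε / 2 ^ (n + 1) = ε := by
    intro n
    induction n with
    | zero => rw [hd0, pow_one, ENNReal.add_halves]
    | succ n ih => rw [hdsucc, add_assoc, half_split, ih]
  have hdle : ∀ n, d n ≤ ε := fun n => le_trans le_self_add (le_of_eq (hdsum n))
  have hdpos : ∀ n, 0 < ε / 2 ^ (n + 2) :=
    fun n => ENNReal.div_pos hε.ne' (ENNReal.pow_ne_top (by norm_num))
  have step : ∀ (n : ℕ) (K : Set (Cantor × Cantor)), IsClopen K →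
      (∀ x, (1:ENNReal) ≤ μ (sect K x) + d n) →
      ∃ K', IsClopen K' ∧ K' ⊆ K ∩ U (n + 1) ∧
        ∀ x, (1:ENNReal) ≤ μ (sect K' x) + d (n + 1) := by
    intro n K hKclo hKmeas
    have hWo : IsOpen (K ∩ U (n + 1)) := hKclo.isOpen.inter (hUo (n + 1))
    have hsec : ∀ x, (1:ENNReal) - d n ≤ μ (sect (K ∩ U (n + 1)) x) := by
      intro x
      have hBmeas : MeasurableSet (sect (U (n + 1)) x) :=
        (sect_open (hUo (n + 1)) x).measurableSet
      have hB1 : μ (sect (U (n + 1)) x) = 1 := by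
        refine le_antisymm ?_ (hU1 (n + 1) x)
        rw [← h1]; exact measure_mono (subset_univ _)
      have hBc : μ ((sect (U (n + 1)) x)ᶜ) = 0 := by
        rw [measure_compl hBmeas (by rw [hB1]; exact ENNReal.one_ne_top), h1, hB1, tsub_self]
      have hsplit : sect K x ⊆ (sect K x ∩ sect (U (n + 1)) x) ∪ (sect (U (n + 1)) x)ᶜ := by
        intro y hy
        by_cases h : y ∈ sect (U (n + 1)) x
        · exact Or.inl ⟨hy, h⟩
        · exact Or.inr h
      have hKle : μ (sect K x) ≤ μ (sect (K ∩ U (n + 1)) x) := by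
        have : sect (K ∩ U (n + 1)) x = sect K x ∩ sect (U (n + 1)) x := rfl
        rw [this]
        calc μ (sect K x) ≤ μ ((sect K x ∩ sect (U (n + 1)) x) ∪ (sect (U (n + 1)) x)ᶜ) :=
              measure_mono hsplit
        _ ≤ μ (sect K x ∩ sect (U (n + 1)) x) + μ ((sect (U (n + 1)) x)ᶜ) := measure_union_le _ _
        _ = μ (sect K x ∩ sect (U (n + 1)) x) := by rw [hBc, add_zero]
      exact le_trans (tsub_le_iff_right.2 (hKmeas x)) hKle
    rcases clopen_approx μ hWo (tsub_le_self) (hdpos n) hsec with ⟨K', hK'clo, hK'sub, hK'meas⟩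
    refine ⟨K', hK'clo, hK'sub, fun x => ?_⟩
    have h2 : (1:ENNReal) ≤ μ (sect K' x) + ε / 2 ^ (n + 2) + d n :=
      tsub_le_iff_right.1 (hK'meas x)
    calc (1:ENNReal) ≤ μ (sect K' x) + ε / 2 ^ (n + 2) + d n := h2
    _ = μ (sect K' x) + d (n + 1) := by rw [hdsucc, add_assoc, add_comm (ε / 2 ^ (n + 2)) (d n)]
  obtain ⟨K0, hK0clo, hK0sub, hK0meas⟩ :=
    clopen_approx μ (hUo 0) (le_refl (1:ENNReal)) (ENNReal.div_pos hε.ne' (by norm_num) :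
      0 < ε / 2) (hU1 0)
  have hK0' : ∀ x, (1:ENNReal) ≤ μ (sect K0 x) + d 0 := by rw [hd0]; exact hK0meas
  obtain ⟨f, hfclo, hfchain, hf0, hfmeas⟩ :
      ∃ f : ℕ → Set (Cantor × Cantor), (∀ n, IsClopen (f n)) ∧
        (∀ n, f (n + 1) ⊆ f n ∩ U (n + 1)) ∧ f 0 ⊆ U 0 ∧
        ∀ n x, (1:ENNReal) ≤ μ (sect (f n) x) + d n := by
    let g : (n : ℕ) → {K : Set (Cantor × Cantor) //
        IsClopen K ∧ ∀ x, (1:ENNReal) ≤ μ (sect K x) + d n} := fun n =>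
      Nat.rec ⟨K0, hK0clo, hK0'⟩
        (fun n p => ⟨(step n p.1 p.2.1 p.2.2).choose,
          (step n p.1 p.2.1 p.2.2).choose_spec.1,
          (step n p.1 p.2.1 p.2.2).choose_spec.2.2⟩) n
    exact ⟨fun n => (g n).1, fun n => (g n).2.1,
      fun n => (step n (g n).1 (g n).2.1 (g n).2.2).choose_spec.2.1,
      hK0sub, fun n => (g n).2.2⟩
  have hanti : Antitone f :=
    antitone_nat_of_succ_le (fun n => (subset_inter_iff.1 (hfchain n)).1)
  have hfU : ∀ n, f n ⊆ U n := by
    intro n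
    cases n with
    | zero => exact hf0
    | succ n => exact (subset_inter_iff.1 (hfchain n)).2
  refine ⟨⋂ n, f n, ?_, ?_, ?_⟩
  · exact (isClosed_iInter (fun n => (hfclo n).isClosed)).isCompact
  · exact iInter_mono hfU
  · intro x
    have hsect : sect (⋂ n, f n) x = ⋂ n, sect (f n) x := by
      ext y; simp [sect]
    have hmeas : ∀ n, NullMeasurableSet (sect (f n) x) μ :=
      fun n => ((sect_open (hfclo n).isOpen x).measurableSet).nullMeasurableSet
    have hdir : Directed (· ⊇ ·) (fun n => sect (f n) x) := by
      apply Antitone.directed_ge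
      intro m n hmn y hy
      exact hanti hmn hy
    have hfin : ∃ n, μ (sect (f n) x) ≠ ⊤ := by
      refine ⟨0, ?_⟩
      rw [← lt_top_iff_ne_top]
      calc μ (sect (f 0) x) ≤ μ univ := measure_mono (subset_univ _)
      _ = 1 := h1
      _ < ⊤ := ENNReal.one_lt_top
    rw [hsect, Directed.measure_iInter hmeas hdir hfin, ENNReal.iInf_add]
    apply le_iInf
    intro n
    calc (1:ENNReal) ≤ μ (sect (f n) x) + d n := hfmeas n x
    _ ≤ μ (sect (f n) x) + ε := add_le_add_right (hdle n) _

lemma le_of_forall_nat_aux {a b : ENNReal} (h : ∀ m : ℕ, a ≤ b + ((m:ENNReal)+1)⁻¹) :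
    a ≤ b := by
  refine ENNReal.le_of_forall_pos_le_add (fun ε hε hbt => ?_)
  rcases ENNReal.exists_inv_nat_lt (by exact_mod_cast hε.ne' : (ε:ENNReal) ≠ 0) with ⟨m, hm⟩
  calc a ≤ b + ((m:ENNReal)+1)⁻¹ := h m
  _ ≤ b + ((m:ENNReal))⁻¹ := add_le_add_right (ENNReal.inv_le_inv.2 le_self_add) _
  _ ≤ b + ε := add_le_add_right hm.le _

end Stmt5Aux

theorem stmt5 (μ : Measure Cantor) (hμ : IsCantorMeasure μ)
    (G : Set (Cantor × Cantor)) (hG : IsGδ G)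
    (hGsect : ∀ x : Cantor, μ (sect G x) = 1)
    (hGfull : μ {x : Cantor | sect G x = univ} = 1) :
    ∃ F : Set (Cantor × Cantor), IsSigmaCompact F ∧ F ⊆ G ∧
      (∀ x : Cantor, μ (sect F x) = 1) ∧
      μ {x : Cantor | sect F x = univ} = 1 := by
  have h1 : μ univ = 1 := by
    have := hμ ∅ (fun _ => false)
    simpa using this
  obtain ⟨U, hUo, hGU⟩ := hG.eq_iInter_nat
  have hU1 : ∀ n x, (1:ENNReal) ≤ μ (sect (U n) x) := by
    intro n x
    rw [← hGsect x]
    refine measure_mono (fun y hy => ?_)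
    rw [hGU] at hy
    exact mem_iInter.1 hy n
  have hεpos : ∀ m : ℕ, (0:ENNReal) < ((m:ENNReal)+1)⁻¹ :=
    fun m => ENNReal.inv_pos.2 (by simp)
  have hK : ∀ m : ℕ, ∃ K : Set (Cantor × Cantor), IsCompact K ∧ K ⊆ G ∧
      ∀ x, (1:ENNReal) ≤ μ (sect K x) + ((m:ENNReal)+1)⁻¹ := by
    intro m
    obtain ⟨K, hKc, hKsub, hKm⟩ := compact_approx μ h1 U hUo hU1 (hεpos m)
    exact ⟨K, hKc, by rw [hGU]; exact hKsub, hKm⟩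
  choose K hKcomp hKsub hKmeas using hK
  set Hs : Set Cantor := {x | sect G x = univ} with hHs
  set V : ℕ → Set Cantor := fun n => (Prod.fst '' (U n)ᶜ)ᶜ with hV
  have hVo : ∀ n, IsOpen (V n) := by
    intro n
    have : IsCompact ((U n)ᶜ) := ((hUo n).isClosed_compl).isCompact
    exact (this.image continuous_fst).isClosed.isOpen_compl
  have hHV : Hs = ⋂ n, V n := by
    ext x
    constructor
    · intro hx
      have hx' : sect G x = univ := hx
      refine mem_iInter.2 (fun n hmem => ?_)
      rcases hmem with ⟨p, hp, hpx⟩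
      apply hp
      have hy : p.2 ∈ sect G x := by rw [hx']; trivial
      rw [hGU] at hy
      have h2 : (x, p.2) ∈ U n := mem_iInter.1 hy n
      have hpe : p = (x, p.2) := by
        rw [← hpx]
      rw [hpe]
      exact h2
    · intro hx
      show sect G x = univ
      ext y
      simp only [mem_univ, iff_true]
      show (x, y) ∈ G
      rw [hGU]
      refine mem_iInter.2 (fun n => ?_)
      by_contra hc
      exact (mem_iInter.1 hx n) ⟨(x, y), hc, rfl⟩
  have hV1 : ∀ n, (1:ENNReal) ≤ μ (V n) := by
    intro n
    rw [← hGfull]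
    refine measure_mono (fun x hx => ?_)
    rw [hHV] at hx
    exact mem_iInter.1 hx n
  have hC : ∀ m : ℕ, ∃ C : Set Cantor, IsCompact C ∧ C ⊆ Hs ∧
      (1:ENNReal) ≤ μ C + ((m:ENNReal)+1)⁻¹ := by
    intro m
    obtain ⟨K', hK'c, hK'sub, hK'm⟩ := compact_approx μ h1
      (fun n => Prod.snd ⁻¹' (V n)) (fun n => (hVo n).preimage continuous_snd)
      (fun n x => by
        have : sect (Prod.snd ⁻¹' (V n)) x = V n := rfl
        rw [this]; exact hV1 n) (hεpos m)
    refine ⟨sect K' (fun _ => false), ?_, ?_, ?_⟩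
    · exact ((hK'c.isClosed.preimage (Continuous.prodMk_right _)) : IsClosed _).isCompact
    · intro y hy
      have := hK'sub hy
      rw [hHV]
      exact mem_iInter.2 (fun n => mem_iInter.1 this n)
    · exact hK'm _
  choose C hCcomp hCsub hCmeas using hC
  refine ⟨(⋃ m, K m) ∪ ((⋃ m, C m) ×ˢ (univ : Set Cantor)), ?_, ?_, ?_, ?_⟩
  · refine ⟨fun m => K m ∪ (C m ×ˢ (univ : Set Cantor)), fun m =>
      (hKcomp m).union ((hCcomp m).prod isCompact_univ), ?_⟩
    rw [iUnion_union_distrib, iUnion_prod_const]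
  · refine union_subset (iUnion_subset hKsub) ?_
    rintro ⟨a, b⟩ ⟨ha, -⟩
    rcases mem_iUnion.1 ha with ⟨m, hm⟩
    have : sect G a = univ := hCsub m hm
    show b ∈ sect G a
    rw [this]; trivial
  · intro x
    refine le_antisymm (by rw [← h1]; exact measure_mono (subset_univ _)) ?_
    refine le_of_forall_nat_aux (fun m => ?_)
    calc (1:ENNReal) ≤ μ (sect (K m) x) + ((m:ENNReal)+1)⁻¹ := hKmeas m x
    _ ≤ _ := add_le_add_left (measure_mono (fun y hy => Or.inl (mem_iUnion.2 ⟨m, hy⟩))) _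
  · refine le_antisymm (by rw [← h1]; exact measure_mono (subset_univ _)) ?_
    refine le_of_forall_nat_aux (fun m => ?_)
    calc (1:ENNReal) ≤ μ (C m) + ((m:ENNReal)+1)⁻¹ := hCmeas m
    _ ≤ _ := by
      refine add_le_add_left (measure_mono (fun x hx => ?_)) _
      show sect ((⋃ m, K m) ∪ ((⋃ m, C m) ×ˢ (univ : Set Cantor))) x = univ
      ext y
      simp only [mem_univ, iff_true]
      exact Or.inr ⟨mem_iUnion.2 ⟨m, hx⟩, trivial⟩
end

section
/- Assume cov(M) = c. Then there exists a Menger totally imperfect set X ⊆ 2^ω × 2^ω whose projection onto the first coordinate is all of 2^ω. -/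
open Set Filter Topology MeasureTheory

/-- Cylinder determined by the first `m` values of `w`. -/
def cylOf (w : Cantor) (m : ℕ) : Set Cantor := {y | ∀ i < m, y i = w i}

lemma self_mem_cylOf (w : Cantor) (m : ℕ) : w ∈ cylOf w m := fun _ _ => rfl

lemma cylOf_nonempty (w : Cantor) (m : ℕ) : (cylOf w m).Nonempty := ⟨w, self_mem_cylOf w m⟩

lemma cylOf_mono {w : Cantor} {m m' : ℕ} (h : m ≤ m') : cylOf w m' ⊆ cylOf w m :=
  fun _ hy i hi => hy i (lt_of_lt_of_le hi h)

lemma cylOf_subset_cylOf {w z : Cantor} {m m' : ℕ} (h : m ≤ m') (hz : z ∈ cylOf w m) :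
    cylOf z m' ⊆ cylOf w m := fun y hy i hi => (hy i (lt_of_lt_of_le hi h)).trans (hz i hi)

lemma isOpen_cylOf (w : Cantor) (m : ℕ) : IsOpen (cylOf w m) := by
  have : cylOf w m = ⋂ i ∈ Finset.range m, (fun y : Cantor => y i) ⁻¹' {w i} := by
    ext y
    simp [cylOf, Set.mem_iInter]
  rw [this]
  exact isOpen_biInter_finset fun i _ =>
    (continuous_apply i).isOpen_preimage _ (isOpen_discrete _)

lemma exists_cylOf_subset {U : Set Cantor} {x : Cantor} (hU : IsOpen U) (hx : x ∈ U) :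
    ∃ m, cylOf x m ⊆ U := by
  have hnh : U ∈ 𝓝 x := hU.mem_nhds hx
  rw [nhds_pi, Filter.mem_pi] at hnh
  obtain ⟨I, hIfin, t, ht, hsub⟩ := hnh
  obtain ⟨F, hF⟩ := hIfin.exists_finset_coe
  refine ⟨(F.sup id) + 1, fun y hy => hsub (Set.mem_pi.mpr fun i hi => ?_)⟩
  have hiF : i ∈ F := by rw [← hF] at hi; exact_mod_cast hi
  have : i < F.sup id + 1 := Nat.lt_succ_of_le (Finset.le_sup (f := id) hiF)
  rw [hy i this]
  exact mem_of_mem_nhds (ht i)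


/-- Cylinder determined by a finite list. -/
def cyl (l : List Bool) : Set Cantor := cylOf (fun i => l.getD i false) l.length

lemma isOpen_cyl (l : List Bool) : IsOpen (cyl l) := isOpen_cylOf _ _

lemma cyl_nonempty (l : List Bool) : (cyl l).Nonempty := cylOf_nonempty _ _

/-- The list of the first `m` values of `w`. -/
def listOf (w : Cantor) (m : ℕ) : List Bool := List.ofFn (fun i : Fin m => w i)

lemma cyl_listOf (w : Cantor) (m : ℕ) : cyl (listOf w m) = cylOf w m := by
  have hlen : (listOf w m).length = m := List.length_ofFn
  ext y
  simp only [cyl, cylOf, Set.mem_setOf_eq, hlen]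
  refine ⟨fun h i hi => ?_, fun h i hi => ?_⟩
  · rw [h i hi]
    rw [List.getD_eq_getElem _ _ (by omega : i < (listOf w m).length)]
    simp [listOf]
  · rw [h i hi]
    rw [List.getD_eq_getElem _ _ (by omega : i < (listOf w m).length)]
    simp [listOf]

lemma dense_of_cyl {S : Set Cantor} (h : ∀ l : List Bool, (S ∩ cyl l).Nonempty) : Dense S := by
  rw [dense_iff_inter_open]
  rintro U hU ⟨x, hx⟩
  obtain ⟨m, hm⟩ := exists_cylOf_subset hU hx
  obtain ⟨y, hyS, hyc⟩ := h (listOf x m)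
  rw [cyl_listOf] at hyc
  exact ⟨y, hm hyc, hyS⟩

/-- Criterion for nowhere density in the Cantor space. -/
lemma nwd_crit {N : Set Cantor}
    (h : ∀ w m, ∃ z ∈ cylOf w m, ∃ m', m ≤ m' ∧ cylOf z m' ∩ N = ∅) :
    IsNowhereDense N := by
  rw [IsNowhereDense]
  by_contra hne
  obtain ⟨x, hx⟩ := Set.nonempty_iff_ne_empty.mpr hne
  obtain ⟨m, hm⟩ := exists_cylOf_subset isOpen_interior hx
  have hsub : cylOf x m ⊆ closure N := hm.trans interior_subset
  obtain ⟨z, hz, m', hmm', hdisj⟩ := h x m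
  have hz' : z ∈ closure N := hsub hz
  obtain ⟨y, hy⟩ := mem_closure_iff.mp hz' (cylOf z m') (isOpen_cylOf _ _) (self_mem_cylOf _ _)
  rw [hdisj] at hy
  exact hy

/-- In a cylinder, one can find a smaller cylinder avoiding the closure of a
nowhere dense set. -/
lemma nwd_avoid {N : Set Cantor} (hN : IsNowhereDense N) (w : Cantor) (m : ℕ) :
    ∃ z ∈ cylOf w m, ∃ m', m ≤ m' ∧ cylOf z m' ∩ closure N = ∅ := by
  have hne : (cylOf w m \ closure N).Nonempty := by
    by_contra hcon
    rw [Set.not_nonempty_iff_eq_empty, Set.diff_eq_empty] at hcon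
    have : cylOf w m ⊆ interior (closure N) :=
      (isOpen_cylOf w m).subset_interior_iff.mpr hcon
    rw [hN] at this
    exact absurd (this (self_mem_cylOf w m)) (Set.notMem_empty _)
  obtain ⟨z, hz1, hz2⟩ := hne
  obtain ⟨m1, hm1⟩ := exists_cylOf_subset ((isOpen_cylOf w m).sdiff isClosed_closure) ⟨hz1, hz2⟩
  refine ⟨z, hz1, max m m1, le_max_left _ _, ?_⟩
  rw [Set.eq_empty_iff_forall_notMem]
  rintro y ⟨hy1, hy2⟩
  exact (hm1 (cylOf_mono (le_max_right m m1) hy1)).2 hy2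


/-- The canonical homeomorphism-onto-its-image from Cantor space to the cylinder `cyl l`. -/
def emb (l : List Bool) (z : Cantor) : Cantor :=
  fun i => if i < l.length then l.getD i false else z (i - l.length)

lemma emb_mem_cyl (l : List Bool) (z : Cantor) : emb l z ∈ cyl l := by
  intro i hi
  simp only [emb, if_pos hi]

lemma emb_injective (l : List Bool) : Function.Injective (emb l) := by
  intro a b hab
  funext i
  have := congrFun hab (i + l.length)
  simpa [emb] using this

lemma range_emb (l : List Bool) : Set.range (emb l) = cyl l := by
  apply Set.Subset.antisymm
  · rintro _ ⟨z, rfl⟩; exact emb_mem_cyl l z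
  · intro y hy
    refine ⟨fun j => y (j + l.length), ?_⟩
    funext i
    simp only [emb]
    split_ifs with hi
    · exact (hy i hi).symm
    · congr 1; omega

lemma continuous_emb (l : List Bool) : Continuous (emb l) := by
  apply continuous_pi
  intro i
  simp only [emb]
  split_ifs with hi
  · exact continuous_const
  · exact continuous_apply _

lemma emb_preimage_nwd {l : List Bool} {N : Set Cantor} (hN : IsNowhereDense N) :
    IsNowhereDense (emb l ⁻¹' N) := by
  apply nwd_crit
  intro w m
  obtain ⟨z, hz, m', hm', hdisj⟩ := nwd_avoid hN (emb l w) (l.length + m)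
  -- z agrees with emb l w on its first l.length coordinates, hence lies in cyl l
  have hzcyl : z ∈ cyl l := by
    intro i hi
    rw [hz i (by omega)]
    simp only [emb, if_pos hi]
  -- z = emb l z' with z' the shift of z
  obtain ⟨z', hz'⟩ : z ∈ Set.range (emb l) := by rw [range_emb]; exact hzcyl
  refine ⟨z', ?_, m' - l.length, by omega, ?_⟩
  · intro i hi
    have h1 : z (i + l.length) = emb l w (i + l.length) := hz _ (by omega)
    have h2 : emb l w (i + l.length) = w i := by simp [emb]
    have h3 : z (i + l.length) = z' i := by
      rw [← hz']; simp [emb]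
    rw [← h3, h1, h2]
  · rw [Set.eq_empty_iff_forall_notMem]
    rintro u ⟨hu1, hu2⟩
    have hmem : emb l u ∈ cylOf z m' := by
      intro i hi
      simp only [emb]
      split_ifs with hil
      · exact ((fun j hj => (hzcyl j hj).symm) i hil)
      · have h4 : u (i - l.length) = z' (i - l.length) := hu1 _ (by omega)
        have h5 : z' (i - l.length) = z i := by
          rw [← hz']; simp only [emb, if_neg hil]
        rw [h4, h5]
    have : emb l u ∈ cylOf z m' ∩ closure N := ⟨hmem, subset_closure hu2⟩
    rw [hdisj] at this
    exact this

lemma emb_preimage_meagre {l : List Bool} {M : Set Cantor} (hM : IsMeagre M) :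
    IsMeagre (emb l ⁻¹' M) := by
  rw [isMeagre_iff_countable_union_isNowhereDense] at hM ⊢
  obtain ⟨S, hS1, hS2, hS3⟩ := hM
  refine ⟨(fun N => emb l ⁻¹' N) '' S, ?_, hS2.image _, ?_⟩
  · rintro _ ⟨N, hN, rfl⟩; exact emb_preimage_nwd (hS1 N hN)
  · intro x hx
    obtain ⟨N, hN, hxN⟩ := hS3 hx
    exact ⟨emb l ⁻¹' N, Set.mem_image_of_mem _ hN, hxN⟩


lemma covMeager_le {S : Set (Set Cantor)} (hS : ∀ A ∈ S, IsMeagre A) (hcov : ⋃₀ S = univ) :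
    covMeager ≤ Cardinal.mk S :=
  csInf_le' ⟨S, rfl, hS, hcov⟩

/-- If cov(M) = continuum, fewer than continuum many meagre sets can't cover a cylinder. -/
lemma covPos (h : covMeager = Cardinal.continuum) {ι : Type} (M : ι → Set Cantor)
    (hι : Cardinal.mk ι < Cardinal.continuum) (hM : ∀ i, IsMeagre (M i)) (l : List Bool) :
    (cyl l \ ⋃ i, M i).Nonempty := by
  by_contra hcon
  rw [Set.not_nonempty_iff_eq_empty, Set.diff_eq_empty] at hcon
  set T : Set (Set Cantor) := Set.range (fun i => emb l ⁻¹' M i) with hT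
  have hTm : ∀ A ∈ T, IsMeagre A := by
    rintro _ ⟨i, rfl⟩; exact emb_preimage_meagre (hM i)
  have hTcov : ⋃₀ T = univ := by
    rw [Set.eq_univ_iff_forall]
    intro z
    have : emb l z ∈ ⋃ i, M i := hcon (emb_mem_cyl l z)
    obtain ⟨_, ⟨i, rfl⟩, hzi⟩ := this
    exact ⟨emb l ⁻¹' M i, ⟨i, rfl⟩, hzi⟩
  have h1 : covMeager ≤ Cardinal.mk T := covMeager_le hTm hTcov
  have h2 : Cardinal.mk T ≤ Cardinal.mk ι := Cardinal.mk_range_le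
  rw [h] at h1
  exact absurd (h1.trans h2) (not_le.mpr hι)


/-- Selection function derived from the gaps between consecutive `false`s of `x`. -/
noncomputable def gapSel (x : Cantor) (n : ℕ) : ℕ :=
  Nat.nth (fun i => x i = false) (n + 1) - Nat.nth (fun i => x i = false) n - 1

lemma count_congr {p q : ℕ → Prop} [DecidablePred p] [DecidablePred q] {n : ℕ}
    (h : ∀ i < n, (p i ↔ q i)) : Nat.count p n = Nat.count q n := by
  induction n with
  | zero => rfl
  | succ n ih =>
    rw [Nat.count_succ, Nat.count_succ, ih (fun i hi => h i (by omega))]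
    by_cases hp : p n
    · rw [if_pos hp, if_pos ((h n (by omega)).mp hp)]
    · rw [if_neg hp, if_neg (fun hq => hp ((h n (by omega)).mpr hq))]

/-- The main combinatorial step: any cylinder contains a smaller cylinder on which
the `q`-th gap takes a prescribed value `v`, where `q` is the number of `false`s
determined by the given cylinder. -/
lemma gap_control (w : Cantor) (m v : ℕ) :
    ∃ z ∈ cylOf w m, ∀ x ∈ cylOf z (m + v + 2),
      gapSel x (Nat.count (fun i => w i = false) m) = v := by
  classical
  set q := Nat.count (fun i => w i = false) m with hq
  refine ⟨fun i => if i < m then w i else if i = m then false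
      else if i ≤ m + v then true else if i = m + v + 1 then false else true,
    fun i hi => by simp [if_pos hi], ?_⟩
  intro x hx
  set px := fun i => x i = false with hpx
  have hxval : ∀ i < m + v + 2, x i = (if i < m then w i else if i = m then false
      else if i ≤ m + v then true else if i = m + v + 1 then false else true) := hx
  have hxm : x m = false := by rw [hxval m (by omega)]; simp
  have hcq : Nat.count px m = q := by
    rw [hq]
    apply count_congr
    intro i hi
    rw [hpx]
    simp only [hxval i (by omega), if_pos hi]
  have hnthq : Nat.nth px q = m := by
    rw [← hcq]; exact Nat.nth_count hxm
  have hxmv : x (m + v + 1) = false := by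
    rw [hxval (m + v + 1) (by omega)]
    split_ifs with h1 h2 h3 h4
    · omega
    · omega
    · omega
    · rfl
    · omega
  have hcount1 : Nat.count px (m + 1) = q + 1 := by
    rw [Nat.count_succ, hcq, if_pos hxm]
  have hcountmid : ∀ j ≤ v, Nat.count px (m + 1 + j) = q + 1 := by
    intro j hj
    induction j with
    | zero => exact hcount1
    | succ j ih =>
      rw [show m + 1 + (j + 1) = (m + 1 + j) + 1 by omega, Nat.count_succ,
        ih (by omega)]
      have : x (m + 1 + j) = true := by
        rw [hxval (m + 1 + j) (by omega)]
        split_ifs with h1 h2 h3 h4 <;> first | rfl | omega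
      rw [if_neg (by simp [hpx, this])]
  have hcmv : Nat.count px (m + v + 1) = q + 1 := by
    have := hcountmid v le_rfl
    rwa [show m + 1 + v = m + v + 1 by omega] at this
  have hnthq1 : Nat.nth px (q + 1) = m + v + 1 := by
    rw [← hcmv]; exact Nat.nth_count hxmv
  rw [gapSel]
  rw [show (fun i => x i = false) = px from rfl, hnthq, hnthq1]
  omega

/-- Sets of size less than the continuum satisfy a one-selection-per-level
covering property (the key combinatorial consequence of cov(M) = c). -/
lemma nwd_isMeagre {α : Type*} [TopologicalSpace α] {N : Set α} (hN : IsNowhereDense N) :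
    IsMeagre N := by
  rw [isMeagre_iff_countable_union_isNowhereDense]
  exact ⟨{N}, by simpa using hN, Set.countable_singleton N, by simp⟩

lemma smallSel {α : Type} (h : covMeager = Cardinal.continuum) (Y : Set α)
    (hY : Cardinal.mk Y < Cardinal.continuum) (u : ℕ → ℕ → Set α)
    (hcov : ∀ p ∈ Y, ∀ n, ∃ k, p ∈ u n k) :
    ∃ f : ℕ → ℕ, ∀ p ∈ Y, ∃ n, p ∈ u n (f n) := by
  classical
  set K : Y → ℕ → ℕ := fun p n => (hcov p.1 p.2 n).choose with hK
  have hKspec : ∀ (p : Y) (n : ℕ), (p : α) ∈ u n (K p n) := fun p n => (hcov p.1 p.2 n).choose_spec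
  set Bad : Y → Set Cantor := fun p => {x | ∀ n, (p : α) ∉ u n (gapSel x n)} with hBad
  have hBadNwd : ∀ p, IsNowhereDense (Bad p) := by
    intro p
    apply nwd_crit
    intro w m
    obtain ⟨z, hz, hzgap⟩ := gap_control w m (K p (Nat.count (fun i => w i = false) m))
    refine ⟨z, hz, m + K p (Nat.count (fun i => w i = false) m) + 2, by omega, ?_⟩
    rw [Set.eq_empty_iff_forall_notMem]
    rintro x ⟨hx1, hx2⟩
    exact hx2 _ (hzgap x hx1 ▸ hKspec p (Nat.count (fun i => w i = false) m))
  obtain ⟨x, -, hxgood⟩ := covPos h Bad hY (fun p => nwd_isMeagre (hBadNwd p)) []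
  refine ⟨gapSel x, ?_⟩
  intro p hp
  have : x ∉ Bad ⟨p, hp⟩ := fun hmem => hxgood (Set.mem_iUnion.mpr ⟨⟨p, hp⟩, hmem⟩)
  rw [hBad] at this
  simp only [Set.mem_setOf_eq] at this
  push_neg at this
  exact this


/-! ### The plane `Cantor × Cantor` -/

abbrev Zp : Type := Cantor × Cantor

lemma exists_box_subset {U : Set Zp} {p : Zp} (hU : IsOpen U) (hp : p ∈ U) :
    ∃ l₁ l₂ : List Bool, p ∈ cyl l₁ ×ˢ cyl l₂ ∧ cyl l₁ ×ˢ cyl l₂ ⊆ U := by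
  obtain ⟨u, v, hu, hv, hpu, hpv, huv⟩ := isOpen_prod_iff.mp hU p.1 p.2 hp
  obtain ⟨m₁, hm₁⟩ := exists_cylOf_subset hu hpu
  obtain ⟨m₂, hm₂⟩ := exists_cylOf_subset hv hpv
  refine ⟨listOf p.1 m₁, listOf p.2 m₂, ?_, ?_⟩
  · rw [cyl_listOf, cyl_listOf]
    exact ⟨self_mem_cylOf _ _, self_mem_cylOf _ _⟩
  · rw [cyl_listOf, cyl_listOf]
    exact fun q hq => huv ⟨hm₁ hq.1, hm₂ hq.2⟩

noncomputable def pbEnum : ℕ → List Bool × List Bool :=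
  (exists_surjective_nat (List Bool × List Bool)).choose

lemma pbEnum_surj : Function.Surjective pbEnum :=
  (exists_surjective_nat (List Bool × List Bool)).choose_spec

/-- Enumeration of basic boxes of the plane. -/
noncomputable def bb (n : ℕ) : Set Zp := cyl (pbEnum n).1 ×ˢ cyl (pbEnum n).2

lemma isOpen_bb (n : ℕ) : IsOpen (bb n) := (isOpen_cyl _).prod (isOpen_cyl _)

/-- Decoding an open set of the plane from a binary sequence. -/
noncomputable def openOf (s : ℕ → Bool) : Set Zp := ⋃ k, (if s k = true then bb k else ∅)

lemma isOpen_openOf (s : ℕ → Bool) : IsOpen (openOf s) :=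
  isOpen_iUnion fun k => by split_ifs; exacts [isOpen_bb k, isOpen_empty]

lemma exists_openOf {U : Set Zp} (hU : IsOpen U) : ∃ s, openOf s = U := by
  classical
  refine ⟨fun k => if bb k ⊆ U then true else false, ?_⟩
  apply Set.Subset.antisymm
  · rintro p hp
    simp only [openOf, Set.mem_iUnion] at hp
    obtain ⟨k, hk⟩ := hp
    by_cases hsub : bb k ⊆ U
    · rw [if_pos (by simp [hsub])] at hk
      exact hsub hk
    · rw [if_neg (by simp [hsub])] at hk
      exact absurd hk (Set.notMem_empty p)
  · intro p hp
    obtain ⟨l₁, l₂, hpmem, hpsub⟩ := exists_box_subset hU hp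
    obtain ⟨k, hk⟩ := pbEnum_surj (l₁, l₂)
    have hbbk : bb k = cyl l₁ ×ˢ cyl l₂ := by rw [bb, hk]
    simp only [openOf, Set.mem_iUnion]
    refine ⟨k, ?_⟩
    rw [if_pos (by simp [hbbk, hpsub])]
    rw [hbbk]
    exact hpmem

/-- Decoding a sequence of countable families of open sets from a single element
of the Cantor space. -/
noncomputable def candOf (t : Cantor) (n k : ℕ) : Set Zp :=
  openOf (fun m => t (Nat.pair (Nat.pair n k) m))

lemma isOpen_candOf (t : Cantor) (n k : ℕ) : IsOpen (candOf t n k) := isOpen_openOf _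

lemma candOf_surj {v : ℕ → ℕ → Set Zp} (hv : ∀ n k, IsOpen (v n k)) :
    ∃ t, candOf t = v := by
  have hs : ∀ n k, ∃ s, openOf s = v n k := fun n k => exists_openOf (hv n k)
  choose s hsspec using hs
  refine ⟨fun c => s c.unpair.1.unpair.1 c.unpair.1.unpair.2 c.unpair.2, ?_⟩
  funext n k
  rw [candOf]
  simp only [Nat.unpair_pair]
  exact hsspec n k

/-- Decoding a closed set of the plane. -/
noncomputable def NsetOf (t : Cantor) : Set Zp := (openOf t)ᶜ

lemma NsetOf_surj {N : Set Zp} (hN : IsClosed N) : ∃ t, NsetOf t = N := by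
  obtain ⟨s, hs⟩ := exists_openOf hN.isOpen_compl
  exact ⟨s, by rw [NsetOf, hs, compl_compl]⟩


noncomputable def lbEnum : ℕ → List Bool := (exists_surjective_nat (List Bool)).choose

lemma lbEnum_surj : Function.Surjective lbEnum := (exists_surjective_nat (List Bool)).choose_spec

/-- A candidate is good if all vertical sections of each level's union are dense. -/
def GoodCand (v : ℕ → ℕ → Set Zp) : Prop := ∀ n x, Dense {y | ∃ k, (x, y) ∈ v n k}

/-- From a good candidate one can select finitely many sets per level so that all
vertical sections of the union become dense. -/
lemma denseSelW {v : ℕ → ℕ → Set Zp} (hop : ∀ n k, IsOpen (v n k)) (hgood : GoodCand v) :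
    ∃ sel : ℕ → Finset ℕ, ∀ x, Dense {y | ∃ n, ∃ k ∈ sel n, (x, y) ∈ v n k} := by
  have hfin : ∀ n, ∃ t : Finset ℕ, (Set.univ : Set Cantor) ⊆
      ⋃ k ∈ t, {x | ∃ y ∈ cyl (lbEnum n), (x, y) ∈ v n k} := by
    intro n
    set D : ℕ → Set Cantor := fun k => {x | ∃ y ∈ cyl (lbEnum n), (x, y) ∈ v n k} with hD
    have hDopen : ∀ k, IsOpen (D k) := by
      intro k
      have : D k = Prod.fst '' (v n k ∩ Set.univ ×ˢ cyl (lbEnum n)) := by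
        ext x
        constructor
        · rintro ⟨y, hy1, hy2⟩
          exact ⟨(x, y), ⟨hy2, Set.mem_univ _, hy1⟩, rfl⟩
        · rintro ⟨⟨x', y⟩, ⟨h1, -, h2⟩, rfl⟩
          exact ⟨y, h2, h1⟩
      rw [this]
      exact isOpenMap_fst _ ((hop n k).inter (isOpen_univ.prod (isOpen_cyl _)))
    have hDcov : (Set.univ : Set Cantor) ⊆ ⋃ k, D k := by
      intro x _
      obtain ⟨y, hy1, hy2⟩ := dense_iff_inter_open.mp (hgood n x) (cyl (lbEnum n))
        (isOpen_cyl _) (cyl_nonempty _)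
      obtain ⟨k, hk⟩ := hy2
      exact Set.mem_iUnion.mpr ⟨k, y, hy1, hk⟩
    exact isCompact_univ.elim_finite_subcover D hDopen hDcov
  choose sel hsel using hfin
  refine ⟨sel, fun x => dense_of_cyl fun l => ?_⟩
  obtain ⟨n₀, hn₀⟩ := lbEnum_surj l
  have := hsel n₀ (Set.mem_univ x)
  simp only [Set.mem_iUnion, Set.mem_setOf_eq] at this
  obtain ⟨k, hk, y, hy1, hy2⟩ := this
  exact ⟨y, ⟨n₀, k, hk, hy2⟩, hn₀ ▸ hy1⟩


lemma mk_cantor : Cardinal.mk Cantor = Cardinal.continuum := by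
  have : Cardinal.mk (ℕ → Bool) = (Cardinal.mk Bool) ^ (Cardinal.mk ℕ) := by
    simpa using Cardinal.mk_arrow ℕ Bool
  rw [show Cardinal.mk Cantor = Cardinal.mk (ℕ → Bool) from rfl, this,
    Cardinal.mk_bool, Cardinal.mk_nat, Cardinal.two_power_aleph0]

lemma not_countable_cyl (l : List Bool) : ¬ (cyl l).Countable := by
  intro hc
  have h1 : Cardinal.mk (cyl l) = Cardinal.continuum := by
    rw [← range_emb l, Cardinal.mk_range_eq _ (emb_injective l), mk_cantor]
  have h2 : Cardinal.mk (cyl l) ≤ Cardinal.aleph0 := by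
    rw [Cardinal.mk_le_aleph0_iff, Set.countable_coe_iff]
    exact hc
  rw [h1] at h2
  exact absurd h2 (not_le.mpr Cardinal.aleph0_lt_continuum)

lemma countable_closed_nwd {A : Set Cantor} (hA : IsClosed A) (hc : A.Countable) :
    IsNowhereDense A := by
  rw [hA.isNowhereDense_iff]
  rw [Set.eq_empty_iff_forall_notMem]
  intro x hx
  obtain ⟨m, hm⟩ := exists_cylOf_subset isOpen_interior hx
  exact not_countable_cyl (listOf x m)
    (hc.mono ((cyl_listOf x m).symm ▸ hm.trans interior_subset))

lemma dense_open_compl_meagre {U : Set Cantor} (ho : IsOpen U) (hd : Dense U) :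
    IsMeagre Uᶜ := by
  apply nwd_isMeagre
  rw [IsNowhereDense, ho.isClosed_compl.closure_eq, interior_compl, hd.closure_eq,
    Set.compl_univ]



theorem stmt12 (h : covMeager = Cardinal.continuum) :
    ∃ X : Set (Cantor × Cantor), Menger X ∧ TotallyImperfect X ∧
      Prod.fst '' X = univ := by
  classical
  -- A well-order of the Cantor space of minimal order type
  obtain ⟨r, wo, hr⟩ := Cardinal.ord_eq Cantor
  haveI := wo
  -- initial segments are small
  have hpred : ∀ x : Cantor, Cardinal.mk {β : Cantor | ¬ r x β} < Cardinal.continuum := by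
    intro x
    have h1 : {β : Cantor | ¬ r x β} ⊆ insert x {β : Cantor | r β x} := by
      intro β hβ
      rcases trichotomous_of r β x with hlt | heq | hgt
      · exact Set.mem_insert_of_mem _ hlt
      · rw [heq]; exact Set.mem_insert _ _
      · exact absurd hgt hβ
    have h2 : Cardinal.mk {β : Cantor | r β x} < Cardinal.continuum := by
      have h3 := Cardinal.card_typein_lt (r := r) x hr
      rw [mk_cantor] at h3
      exact h3
    calc Cardinal.mk {β : Cantor | ¬ r x β}
        ≤ Cardinal.mk (insert x {β : Cantor | r β x} : Set Cantor) :=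
          Cardinal.mk_le_mk_of_subset h1
      _ ≤ Cardinal.mk {β : Cantor | r β x} + 1 := Cardinal.mk_insert_le
      _ < Cardinal.continuum := Cardinal.add_lt_of_lt Cardinal.aleph0_le_continuum h2
          (lt_trans Cardinal.one_lt_aleph0 Cardinal.aleph0_lt_continuum)
  -- the dense-sections open sets
  set W : Cantor → Set Zp := fun β =>
    if hg : GoodCand (candOf β) then
      ⋃ n, ⋃ k ∈ (denseSelW (isOpen_candOf β) hg).choose n, candOf β n k
    else Set.univ with hWdef
  have hWopen : ∀ β, IsOpen (W β) := by
    intro β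
    simp only [hWdef]
    split_ifs with hg
    · exact isOpen_iUnion fun n => isOpen_biUnion fun k _ => isOpen_candOf β n k
    · exact isOpen_univ
  have hWsd : ∀ β x, Dense (sect (W β) x) := by
    intro β x
    simp only [hWdef]
    split_ifs with hg
    · have hspec := (denseSelW (isOpen_candOf β) hg).choose_spec x
      convert hspec using 1
      ext y
      simp [sect, Set.mem_iUnion]
    · have : sect Set.univ x = (Set.univ : Set Cantor) := by ext y; simp [sect]
      rw [this]
      exact dense_univ
  have hWsm : ∀ β x, IsMeagre (sect (W β) x)ᶜ := by
    intro β x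
    exact dense_open_compl_meagre ((hWopen β).preimage (Continuous.prodMk_right x)) (hWsd β x)
  -- the nowhere dense avoidance sets
  set badN : Cantor → Cantor → Set Cantor := fun β x =>
    if IsNowhereDense (sect (NsetOf β) x) then sect (NsetOf β) x else ∅ with hbadNdef
  have hbadN_nwd : ∀ β x, IsNowhereDense (badN β x) := by
    intro β x
    simp only [hbadNdef]
    split_ifs with hn
    · exact hn
    · exact isNowhereDense_empty
  -- choosing the points
  have hex : ∀ (x : Cantor) (l : List Bool), ∃ y, y ∈ cyl l ∧
      (∀ β, ¬ r x β → (x, y) ∈ W β) ∧ (∀ β, ¬ r x β → y ∉ badN β x) := by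
    intro x l
    have hι : Cardinal.mk ({β : Cantor // ¬ r x β} × Bool) < Cardinal.continuum := by
      have := Cardinal.mk_prod ({β : Cantor // ¬ r x β}) Bool
      rw [Cardinal.lift_id, Cardinal.lift_id, Cardinal.mk_bool] at this
      rw [this]
      exact Cardinal.mul_lt_of_lt Cardinal.aleph0_le_continuum (hpred x)
        (lt_trans (by exact_mod_cast Cardinal.nat_lt_aleph0 2) Cardinal.aleph0_lt_continuum)
    set M : {β : Cantor // ¬ r x β} × Bool → Set Cantor := fun i =>
      if i.2 then (sect (W i.1.1) x)ᶜ else badN i.1.1 x with hMdef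
    have hM : ∀ i, IsMeagre (M i) := by
      rintro ⟨β, b⟩
      simp only [hMdef]
      cases b
      · simpa using nwd_isMeagre (hbadN_nwd β.1 x)
      · simpa using hWsm β.1 x
    obtain ⟨y, hy1, hy2⟩ := covPos h M hι hM l
    refine ⟨y, hy1, fun β hβ => ?_, fun β hβ hybad => ?_⟩
    · by_contra hyW
      exact hy2 (Set.mem_iUnion.mpr ⟨⟨⟨β, hβ⟩, true⟩, by simpa [hMdef, sect] using hyW⟩)
    · exact hy2 (Set.mem_iUnion.mpr ⟨⟨⟨β, hβ⟩, false⟩, by simpa [hMdef] using hybad⟩)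
  choose pick hpick1 hpick2 hpick3 using hex
  -- the set X
  refine ⟨{p : Cantor × Cantor | ∃ l : List Bool, p.2 = pick p.1 l}, ?_, ?_, ?_⟩
  · -- Menger
    intro U hU
    set X : Set Zp := {p : Cantor × Cantor | ∃ l : List Bool, p.2 = pick p.1 l} with hXdef
    have hXne : X.Nonempty := ⟨((fun _ => false), pick (fun _ => false) []), ⟨[], rfl⟩⟩
    -- countable subcovers
    have hcnt : ∀ n, ∃ u : ℕ → Set Zp, (∀ k, u k ∈ U n) ∧ X ⊆ ⋃ k, u k := by
      intro n
      obtain ⟨T, hTc, hTsub, hTeq⟩ := TopologicalSpace.isOpen_sUnion_countable (U n) (hU n).1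
      have hXT : X ⊆ ⋃₀ T := by rw [hTeq]; exact (hU n).2
      have hTne : T.Nonempty := by
        obtain ⟨p, hp⟩ := hXne
        obtain ⟨s, hs, -⟩ := hXT hp
        exact ⟨s, hs⟩
      obtain ⟨g, hg⟩ := Set.Countable.exists_eq_range hTc hTne
      refine ⟨g, fun k => hTsub (by rw [hg]; exact Set.mem_range_self k), ?_⟩
      rwa [← Set.sUnion_range, ← hg]
    choose uE huE1 huE2 using hcnt
    have hopen : ∀ n k, IsOpen (uE n k) := fun n k => (hU n).1 _ (huE1 n k)
    obtain ⟨t, ht⟩ := candOf_surj hopen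
    have hgood : GoodCand (candOf t) := by
      rw [ht]
      intro n x
      apply dense_of_cyl
      intro l
      refine ⟨pick x l, ?_, hpick1 x l⟩
      have hmem : (x, pick x l) ∈ X := ⟨l, rfl⟩
      have := huE2 n hmem
      rw [Set.mem_iUnion] at this
      obtain ⟨k, hk⟩ := this
      exact ⟨k, hk⟩
    have hWt : W t = ⋃ n, ⋃ k ∈ (denseSelW (isOpen_candOf t) hgood).choose n, candOf t n k := by
      simp only [hWdef]
      rw [dif_pos hgood]
    set sel := (denseSelW (isOpen_candOf t) hgood).choose with hseldef
    -- the leftover set is small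
    set L : Set Zp := {p | p ∈ X ∧ r p.1 t} with hLdef
    have hLcard : Cardinal.mk L < Cardinal.continuum := by
      set g : {β : Cantor // r β t} × List Bool → Zp := fun q => (q.1.1, pick q.1.1 q.2) with hgdef
      have hLsub : L ⊆ Set.range g := by
        rintro p ⟨⟨l, hl⟩, hrp⟩
        refine ⟨(⟨p.1, hrp⟩, l), ?_⟩
        rw [hgdef]
        exact Prod.ext rfl hl.symm
      have h1 : Cardinal.mk L ≤ Cardinal.mk (Set.range g) := Cardinal.mk_le_mk_of_subset hLsub
      have h2 : Cardinal.mk (Set.range g) ≤ Cardinal.mk ({β : Cantor // r β t} × List Bool) :=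
        Cardinal.mk_range_le
      have h3 : Cardinal.mk ({β : Cantor // r β t} × List Bool) < Cardinal.continuum := by
        have hp := Cardinal.mk_prod ({β : Cantor // r β t}) (List Bool)
        rw [Cardinal.lift_id, Cardinal.lift_id] at hp
        rw [hp, Cardinal.mk_eq_aleph0 (List Bool)]
        refine Cardinal.mul_lt_of_lt Cardinal.aleph0_le_continuum ?_ Cardinal.aleph0_lt_continuum
        refine lt_of_le_of_lt (Cardinal.mk_le_mk_of_subset ?_) (hpred t)
        exact fun y hy => asymm_of r hy
      exact lt_of_le_of_lt (h1.trans h2) h3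
    obtain ⟨f, hf⟩ := smallSel h L hLcard uE (fun p hp n => by
      have := huE2 n hp.1
      rw [Set.mem_iUnion] at this
      exact this)
    -- the final selection
    refine ⟨fun n => (uE n '' (sel n : Set ℕ)) ∪ {uE n (f n)}, fun n => ⟨?_, ?_⟩, ?_⟩
    · rintro v (⟨k, -, rfl⟩ | hv)
      · exact huE1 n k
      · rw [Set.mem_singleton_iff] at hv
        rw [hv]
        exact huE1 n (f n)
    · exact (((sel n : Set ℕ).toFinite.image _).union (Set.finite_singleton _))
    · intro p hp
      by_cases hcase : r p.1 t
      · obtain ⟨n, hn⟩ := hf p ⟨hp, hcase⟩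
        exact Set.mem_iUnion.mpr ⟨n, uE n (f n), Or.inr rfl, hn⟩
      · obtain ⟨l, hl⟩ := hp
        have hmem : (p.1, pick p.1 l) ∈ W t := hpick2 p.1 l t hcase
        rw [← hl] at hmem
        rw [hWt] at hmem
        simp only [Set.mem_iUnion] at hmem
        obtain ⟨n, k, hk, hmem'⟩ := hmem
        rw [ht] at hmem'
        refine Set.mem_iUnion.mpr ⟨n, uE n k, Or.inl ⟨k, hk, rfl⟩, ?_⟩
        rwa [Prod.mk.eta] at hmem'
  · -- Totally imperfect
    intro P hPX hP
    rw [← Set.not_nonempty_iff_eq_empty]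
    rintro hne
    have hPunc : ¬ P.Countable := by
      intro hc
      obtain ⟨f, hfr, -, hfi⟩ := by
        letI := TopologicalSpace.upgradeIsCompletelyMetrizable (Cantor × Cantor)
        exact hP.exists_nat_bool_injection hne
      have h1 : Cardinal.mk (Set.range f) = Cardinal.continuum := by
        rw [Cardinal.mk_range_eq _ hfi, mk_cantor]
      have h2 : Cardinal.mk (Set.range f) ≤ Cardinal.aleph0 := by
        rw [Cardinal.mk_le_aleph0_iff, Set.countable_coe_iff]
        exact hc.mono hfr
      rw [h1] at h2
      exact absurd h2 (not_le.mpr Cardinal.aleph0_lt_continuum)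
    set K : Set Cantor := Prod.fst '' P with hKdef
    have hKclosed : IsClosed K := (hP.closed.isCompact.image continuous_fst).isClosed
    have hKunc : ¬ K.Countable := by
      intro hKc
      apply hPunc
      have hsub : P ⊆ ⋃ x ∈ K, ({x} ×ˢ Set.range (pick x)) := by
        intro p hp
        have hx : p.1 ∈ K := ⟨p, hp, rfl⟩
        obtain ⟨l, hl⟩ := hPX hp
        exact Set.mem_biUnion hx ⟨rfl, ⟨l, hl.symm⟩⟩
      exact ((hKc.biUnion fun x _ =>
        (Set.countable_singleton x).prod (Set.countable_range _)).mono hsub)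
    obtain ⟨V, D, hVc, hDperf, hKVD⟩ := exists_countable_union_perfect_of_isClosed hKclosed
    have hDne : D.Nonempty := by
      rw [Set.nonempty_iff_ne_empty]
      rintro rfl
      rw [Set.union_empty] at hKVD
      exact hKunc (hKVD ▸ hVc)
    have hDbig : Cardinal.continuum ≤ Cardinal.mk D := by
      obtain ⟨f, hfr, -, hfi⟩ := by
        letI := TopologicalSpace.upgradeIsCompletelyMetrizable Cantor
        exact hDperf.exists_nat_bool_injection hDne
      calc Cardinal.continuum = Cardinal.mk (Set.range f) := by
            rw [Cardinal.mk_range_eq _ hfi, mk_cantor]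
        _ ≤ Cardinal.mk D := Cardinal.mk_le_mk_of_subset hfr
    obtain ⟨β, hβ⟩ := NsetOf_surj hP.closed
    have hDnsub : ¬ (D ⊆ {y : Cantor | ¬ ¬ r y β}) := by
      intro hsub
      have h1 : Cardinal.mk {y : Cantor | ¬ ¬ r y β} < Cardinal.continuum := by
        refine lt_of_le_of_lt (Cardinal.mk_le_mk_of_subset ?_) (hpred β)
        intro y hy
        rw [Set.mem_setOf_eq, not_not] at hy
        exact asymm_of r hy
      exact absurd (hDbig.trans (Cardinal.mk_le_mk_of_subset hsub)) (not_le.mpr h1)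
    obtain ⟨x, hxD, hxβ'⟩ := Set.not_subset.mp hDnsub
    rw [Set.mem_setOf_eq, not_not] at hxβ'
    have hxβ : ¬ r x β := hxβ'
    have hxK : x ∈ K := hKVD ▸ Or.inr hxD
    obtain ⟨p, hpP, hpx⟩ := hxK
    set A : Set Cantor := sect P x with hAdef
    have hAne : A.Nonempty := ⟨p.2, by
      show (x, p.2) ∈ P
      rw [← hpx]
      exact hpP⟩
    have hAsub : A ⊆ Set.range (pick x) := by
      intro y hy
      obtain ⟨l, hl⟩ := hPX hy
      exact ⟨l, hl.symm⟩
    have hAclosed : IsClosed A := hP.closed.preimage (Continuous.prodMk_right x)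
    have hAnwd : IsNowhereDense A := countable_closed_nwd hAclosed
      ((Set.countable_range _).mono hAsub)
    have hbad : badN β x = A := by
      simp only [hbadNdef, hβ]
      rw [if_pos hAnwd]
    obtain ⟨y, hyA⟩ := hAne
    have hyrange := hAsub hyA
    obtain ⟨l, hl⟩ := hyrange
    have hnot := hpick3 x l β hxβ
    rw [hbad, hl] at hnot
    exact hnot hyA
  · -- Full projection
    rw [Set.eq_univ_iff_forall]
    intro x
    exact ⟨(x, pick x []), ⟨[], rfl⟩, rfl⟩
end
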